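/- arXiv:2510.21157 — 2 statements merged into one kernel-verified Lean document; each statement's English description precedes it below -/
import Mathlib

section
/- For |q|<1 and z not a nonpositive integer power of q, the Jacobi triple product identity holds: (q^2; q^2)_∞ (qz; q^2)_∞ (q/z; q^2)_∞ = ∑_{n=-∞}^{∞} (-1)^n z^n q^{n^2}. -/
open Complex

/-- Infinite q-Pochhammer symbol `(a;q)_∞ = ∏_{k=0}^∞ (1 - a q^k)`. -/
noncomputable def qPochInf (a q : ℂ) : ℂ := ∏' k : ℕ, (1 - a * q ^ k)

set_option linter.unusedVariables false
set_option linter.unusedTactic false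
set_option maxHeartbeats 1000000


open Finset

namespace JTP

variable (t : ℂ)

noncomputable def B : ℕ → ℤ → ℂ
  | 0, k => if k = 0 then 1 else 0
  | (m+1), k => B m k + t ^ ((m : ℤ) + 1 - k) * B m (k - 1)

variable {t}

lemma B_succ (m : ℕ) (k : ℤ) :
    B t (m+1) k = B t m k + t ^ ((m : ℤ) + 1 - k) * B t m (k - 1) := by
  rw [B]

lemma B_neg : ∀ (m : ℕ) {k : ℤ}, k < 0 → B t m k = 0 := by
  intro m
  induction m with
  | zero => intro k hk; simp [B, hk.ne]
  | succ m ih => intro k hk; rw [B_succ, ih hk, ih (by omega), mul_zero, add_zero]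

lemma B_gt : ∀ (m : ℕ) {k : ℤ}, (m : ℤ) < k → B t m k = 0 := by
  intro m
  induction m with
  | zero => intro k hk; simp [B]; omega
  | succ m ih =>
    intro k hk
    rw [B_succ, ih (by omega), ih (by omega), mul_zero, add_zero]

lemma B_zero (m : ℕ) : B t m 0 = 1 := by
  induction m with
  | zero => simp [B]
  | succ m ih => rw [B_succ, ih, B_neg m (by omega), mul_zero, add_zero]

lemma B_self (m : ℕ) : B t m m = 1 := by
  induction m with
  | zero => simp [B]
  | succ m ih =>
    rw [B_succ, B_gt m (by push_cast; omega)]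
    have : ((m : ℤ) + 1 - (m + 1)) = 0 := by push_cast; ring
    push_cast
    rw [this, zpow_zero, one_mul, zero_add]
    have : ((m : ℤ) + 1 - 1) = m := by ring
    rw [this, ih]

lemma B_pascal2 (ht : t ≠ 0) : ∀ (m : ℕ) (k : ℤ),
    B t (m+1) k = t ^ k * B t m k + B t m (k - 1) := by
  intro m
  induction m with
  | zero =>
    intro k
    rcases eq_or_ne k 0 with rfl | h0
    · simp [B]
    rcases eq_or_ne k 1 with rfl | h1
    · norm_num [B]
    · simp [B, h0, h1, sub_eq_zero, show k - 1 ≠ 0 by omega,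
        show ¬ (1:ℤ) = k from fun h => h1 h.symm]
  | succ m ih =>
    intro k
    have h1 : t ^ ((m:ℤ) + 1 + 1 - k) * t ^ (k - 1) = t ^ ((m:ℤ) + 1) := by
      rw [← zpow_add₀ ht]; ring_nf
    have h2 : t ^ (k:ℤ) * t ^ ((m:ℤ) + 1 - k) = t ^ ((m:ℤ) + 1) := by
      rw [← zpow_add₀ ht]; ring_nf
    calc B t (m+1+1) k
        = B t (m+1) k + t ^ ((m:ℤ) + 1 + 1 - k) * B t (m+1) (k-1) := by
          rw [B_succ]; push_cast; ring_nf
      _ = (t ^ k * B t m k + B t m (k-1))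
          + t ^ ((m:ℤ) + 1 + 1 - k) * (t ^ (k-1) * B t m (k-1) + B t m (k-1-1)) := by
          rw [ih k, ih (k-1)]
      _ = t ^ k * (B t m k + t ^ ((m:ℤ) + 1 - k) * B t m (k-1))
          + (B t m (k-1) + t ^ ((m:ℤ) + 1 - (k-1)) * B t m (k-1-1)) := by
          have h3 : t ^ ((m:ℤ) + 1 + 1 - k) = t ^ ((m:ℤ) + 1 - (k-1)) := by ring_nf
          rw [h3] at h1 ⊢
          linear_combination B t m (k-1) * h1 - B t m (k-1) * h2
      _ = t ^ k * B t (m+1) k + B t (m+1) (k-1) := by rw [B_succ, B_succ]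

lemma B_doublePascal (ht : t ≠ 0) (m : ℕ) (K : ℤ) :
    B t (m+2) K = t ^ K * B t m K + (1 + t ^ ((m:ℤ)+1)) * B t m (K - 1)
      + t ^ ((m:ℤ) + 2 - K) * B t m (K - 2) := by
  have h1 : t ^ ((m:ℤ) + 1 + 1 - K) * t ^ (K - 1) = t ^ ((m:ℤ) + 1) := by
    rw [← zpow_add₀ ht]; ring_nf
  calc B t (m+2) K
      = B t (m+1) K + t ^ ((m:ℤ) + 1 + 1 - K) * B t (m+1) (K-1) := by
        rw [B_succ]; push_cast; ring_nf
    _ = (t ^ K * B t m K + B t m (K-1))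
        + t ^ ((m:ℤ) + 1 + 1 - K) * (t ^ (K-1) * B t m (K-1) + B t m (K-1-1)) := by
        rw [B_pascal2 ht, B_pascal2 ht]
    _ = t ^ K * B t m K + (1 + t ^ ((m:ℤ)+1)) * B t m (K - 1)
        + t ^ ((m:ℤ) + 2 - K) * B t m (K - 2) := by
        have h3 : t ^ ((m:ℤ) + 1 + 1 - K) = t ^ ((m:ℤ) + 2 - K) := by ring_nf
        have h4 : (K:ℤ) - 1 - 1 = K - 2 := by ring
        rw [h3] at h1 ⊢
        rw [h4]
        linear_combination B t m (K-1) * h1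

end JTP

namespace JTP

variable {t : ℂ}

noncomputable def P (t : ℂ) (m : ℕ) : ℂ := ∏ i ∈ Finset.range m, (1 - t * t ^ i)

lemma P_zero : P t 0 = 1 := by simp [P]

lemma P_succ (m : ℕ) : P t (m+1) = P t m * (1 - t * t ^ m) := by
  rw [P, Finset.prod_range_succ, P]

lemma B_mul_P (ht : t ≠ 0) : ∀ (m k j : ℕ), m = k + j →
    B t m (k:ℤ) * P t k * P t j = P t m := by
  intro m
  induction m with
  | zero =>
    intro k j h
    obtain ⟨rfl, rfl⟩ : k = 0 ∧ j = 0 := by omega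
    simp [B, P]
  | succ m ih =>
    intro k j h
    rcases k with _ | k'
    · obtain rfl : j = m + 1 := by omega
      simp [B_zero, P_zero]
    rcases j with _ | j'
    · have hk : m + 1 = k' + 1 := by omega
      rw [← hk]
      have hb : B t (m+1) ((m+1 : ℕ) : ℤ) = 1 := by
        have := B_self (t := t) (m+1); push_cast at this ⊢; exact this
      rw [hb, P_zero, one_mul, mul_one]
    · have hm : m = (k'+1) + j' := by omega
      have h1 := ih (k'+1) j' hm
      have h2 := ih k' (j'+1) (by omega)
      have hb : B t (m+1) ((k'+1 : ℕ) : ℤ)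
          = B t m ((k'+1 : ℕ) : ℤ) + t ^ (j'+1 : ℕ) * B t m (k' : ℕ) := by
        rw [B_succ]
        have e1 : ((m:ℤ) + 1 - ((k'+1 : ℕ) : ℤ)) = ((j'+1 : ℕ) : ℤ) := by push_cast; omega
        have e2 : (((k'+1 : ℕ) : ℤ) - 1) = (k' : ℤ) := by push_cast; omega
        rw [e1, e2, zpow_natCast]
      have hm' : t ^ m = t ^ (k'+1+j') := by rw [hm]
      rw [hb, P_succ k', P_succ j', P_succ m, hm']
      rw [P_succ] at h1
      rw [P_succ] at h2
      linear_combination (1 - t * t ^ j') * h1 + (t * t ^ j') * (1 - t * t ^ k') * h2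

end JTP

namespace JTP

variable {q z : ℂ}

/-- Terms of the finite theta sum. -/
noncomputable def F (q z : ℂ) (N : ℕ) (n : ℤ) : ℂ :=
  B (q^2) (2*N) (n + (N:ℤ)) * ((-1:ℂ)^n * z^n * q^(n^2))

lemma F_eq_zero {N : ℕ} {n : ℤ} (h : n < -(N:ℤ) ∨ (N:ℤ) < n) : F q z N n = 0 := by
  rcases h with h | h
  · rw [F, B_neg _ (by omega), zero_mul]
  · rw [F, B_gt _ (by push_cast; omega), zero_mul]

lemma F_rec (hq : q ≠ 0) (hz : z ≠ 0) (N : ℕ) (n : ℤ) :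
    F q z (N+1) n = (1 + q^(4*N+2)) * F q z N n
      - q^(2*N+1) * z * F q z N (n-1) - q^(2*N+1) * z⁻¹ * F q z N (n+1) := by
  have hm1 : (-1:ℂ) ≠ 0 := by norm_num
  have ht : (q^2:ℂ) ≠ 0 := pow_ne_zero 2 hq
  have f1 : (q^2:ℂ)^(((2*N:ℕ):ℤ)+1) = q^(4*N+2) := by
    rw [← zpow_natCast q 2, ← zpow_mul, ← zpow_natCast q (4*N+2)]
    congr 1; push_cast; ring
  have f2 : (q^2:ℂ)^(n+(N:ℤ)+1) * ((-1:ℂ)^n * z^n * q^(n^2))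
      = - (q^(2*N+1) * z⁻¹) * ((-1:ℂ)^(n+1) * z^(n+1) * q^((n+1)^2)) := by
    rw [show (q^2:ℂ)^(n+(N:ℤ)+1) = q^((2*(N:ℤ)+1)+(2*n+1)) by
        rw [← zpow_natCast q 2, ← zpow_mul]; congr 1; ring]
    rw [zpow_add₀ hq, zpow_add_one₀ hm1, zpow_add_one₀ hz,
      show (n+1)^2 = n^2+(2*n+1) by ring, zpow_add₀ hq (n^2) (2*n+1),
      ← zpow_natCast q (2*N+1), show ((2*N+1:ℕ):ℤ) = 2*(N:ℤ)+1 by push_cast; ring]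
    field_simp
  have f3 : (q^2:ℂ)^(((2*N:ℕ):ℤ) + 2 - (n+(N:ℤ)+1)) * ((-1:ℂ)^n * z^n * q^(n^2))
      = - (q^(2*N+1) * z) * ((-1:ℂ)^(n-1) * z^(n-1) * q^((n-1)^2)) := by
    rw [show (q^2:ℂ)^(((2*N:ℕ):ℤ) + 2 - (n+(N:ℤ)+1)) = q^((2*(N:ℤ)+1)+(1-2*n)) by
        rw [← zpow_natCast q 2, ← zpow_mul]; congr 1; push_cast; ring]
    rw [zpow_add₀ hq, zpow_sub_one₀ hm1, zpow_sub_one₀ hz,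
      show (n-1)^2 = n^2+(1-2*n) by ring, zpow_add₀ hq (n^2) (1-2*n),
      ← zpow_natCast q (2*N+1), show ((2*N+1:ℕ):ℤ) = 2*(N:ℤ)+1 by push_cast; ring]
    field_simp
  have key := B_doublePascal (t := q^2) ht (2*N) (n + (N:ℤ) + 1)
  have e0 : F q z (N+1) n = B (q^2) (2*N+2) (n + (N:ℤ) + 1) * ((-1:ℂ)^n * z^n * q^(n^2)) := by
    rw [F, show 2*(N+1) = 2*N+2 by ring]
    congr 2
    push_cast; ring
  rw [e0, key, F, F, F]
  rw [show n + (N:ℤ) + 1 - 1 = n + (N:ℤ) by ring,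
    show n + (N:ℤ) + 1 - 2 = (n-1) + (N:ℤ) by ring,
    show (n:ℤ) + 1 + (N:ℤ) = n + (N:ℤ) + 1 by ring]
  linear_combination B (q^2) (2*N) (n + (N:ℤ) + 1) * f2
    + B (q^2) (2*N) ((n-1) + (N:ℤ)) * f3
    + B (q^2) (2*N) (n + (N:ℤ)) * ((-1:ℂ)^n * z^n * q^(n^2)) * f1

end JTP

namespace JTP

variable {q z : ℂ}

noncomputable def I (N : ℕ) : Finset ℤ := Finset.Icc (-(N:ℤ)) N

lemma sum_F_subset (N : ℕ) {s : Finset ℤ} (hs : I N ⊆ s) :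
    ∑ n ∈ s, F q z N n = ∑ n ∈ I N, F q z N n := by
  refine (Finset.sum_subset hs (fun x _ hx => ?_)).symm
  refine F_eq_zero ?_
  simp only [I, Finset.mem_Icc] at hx
  omega

lemma sum_F_shift (N : ℕ) (c : ℤ) (hc : -1 ≤ c ∧ c ≤ 1) :
    ∑ n ∈ I (N+1), F q z N (n + c) = ∑ n ∈ I N, F q z N n := by
  have : ∑ n ∈ I (N+1), F q z N (n + c)
      = ∑ n ∈ (I (N+1)).map (addRightEmbedding c), F q z N n := by
    rw [Finset.sum_map]
    rfl
  rw [this]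
  refine sum_F_subset N ?_
  intro x hx
  simp only [I, Finset.mem_Icc, Finset.mem_map, addRightEmbedding_apply] at hx ⊢
  exact ⟨x - c, by omega, by ring⟩

lemma finite_id (hq : q ≠ 0) (hz : z ≠ 0) (N : ℕ) :
    (∏ j ∈ Finset.range N, ((1 - q*z*(q^2)^j) * (1 - q*z⁻¹*(q^2)^j)))
      = ∑ n ∈ I N, F q z N n := by
  induction N with
  | zero => simp [I, F, B]
  | succ N ih =>
    have hsub : I N ⊆ I (N+1) := by
      intro x hx; simp only [I, Finset.mem_Icc] at hx ⊢; push_cast; omega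
    have e1 : ∑ n ∈ I (N+1), F q z (N+1) n
        = (1+q^(4*N+2)) * ∑ n ∈ I (N+1), F q z N n
          - q^(2*N+1) * z * ∑ n ∈ I (N+1), F q z N (n + (-1))
          - q^(2*N+1) * z⁻¹ * ∑ n ∈ I (N+1), F q z N (n + 1) := by
      rw [Finset.mul_sum, Finset.mul_sum, Finset.mul_sum, ← Finset.sum_sub_distrib,
        ← Finset.sum_sub_distrib]
      refine Finset.sum_congr rfl (fun n _ => ?_)
      rw [show n + (-1 : ℤ) = n - 1 by ring]
      exact F_rec hq hz N n
    rw [Finset.prod_range_succ, ih, e1, sum_F_shift N (-1) (by omega),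
      sum_F_shift N 1 (by omega), sum_F_subset N hsub]
    have hzz : z * z⁻¹ = 1 := mul_inv_cancel₀ hz
    linear_combination (∑ n ∈ I N, F q z N n) * q^(4*N+2) * hzz

end JTP

namespace JTP
variable {t : ℂ}

lemma geom_aux (ht : ‖t‖ < 1) (m : ℕ) : ∑ i ∈ range m, ‖t‖ ^ i ≤ (1 - ‖t‖)⁻¹ := by
  refine (Summable.sum_le_tsum (L := SummationFilter.unconditional ℕ) (range m) (fun i _ => by positivity) ?_).trans_eq ?_
  · exact summable_geometric_of_lt_one (norm_nonneg t) ht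
  · exact tsum_geometric_of_lt_one (norm_nonneg t) ht

lemma norm_P_le (ht : ‖t‖ < 1) (m : ℕ) : ‖P t m‖ ≤ Real.exp (‖t‖ * (1 - ‖t‖)⁻¹) := by
  have hr0 : (0:ℝ) ≤ ‖t‖ := norm_nonneg t
  calc ‖P t m‖ = ∏ i ∈ range m, ‖1 - t * t ^ i‖ := norm_prod _ _
    _ ≤ ∏ i ∈ range m, Real.exp (‖t‖ * ‖t‖ ^ i) := by
        refine Finset.prod_le_prod (fun i _ => norm_nonneg _) (fun i _ => ?_)
        have h1 : ‖(1:ℂ) - t * t ^ i‖ ≤ 1 + ‖t‖ * ‖t‖ ^ i := by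
          refine (norm_sub_le _ _).trans ?_
          simp [norm_mul, norm_pow]
        exact h1.trans (by linarith [Real.add_one_le_exp (‖t‖ * ‖t‖ ^ i)])
    _ = Real.exp (∑ i ∈ range m, ‖t‖ * ‖t‖ ^ i) := (Real.exp_sum _ _).symm
    _ ≤ Real.exp (‖t‖ * (1 - ‖t‖)⁻¹) := by
        rw [Real.exp_le_exp, ← Finset.mul_sum]
        exact mul_le_mul_of_nonneg_left (geom_aux ht m) hr0

lemma factor_lower (ht : ‖t‖ < 1) (i : ℕ) :
    Real.exp (-(‖t‖ * ‖t‖ ^ i * (1 - ‖t‖)⁻¹)) ≤ ‖1 - t * t ^ i‖ := by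
  set x : ℝ := ‖t‖ * ‖t‖ ^ i with hxdef
  have hx0 : 0 ≤ x := by positivity
  have hxr : x ≤ ‖t‖ := by
    calc x = ‖t‖ * ‖t‖ ^ i := rfl
      _ ≤ ‖t‖ * 1 := by
          refine mul_le_mul_of_nonneg_left ?_ (norm_nonneg t)
          exact pow_le_one₀ (norm_nonneg t) ht.le
      _ = ‖t‖ := mul_one _
  have hx1 : x < 1 := lt_of_le_of_lt hxr ht
  have step1 : Real.exp (-(x * (1 - ‖t‖)⁻¹)) ≤ Real.exp (-(x * (1 - x)⁻¹)) := by
    rw [Real.exp_le_exp, neg_le_neg_iff]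
    have h4 : (1-x)⁻¹ ≤ (1-‖t‖)⁻¹ := by
      refine inv_anti₀ (by linarith) (by linarith)
    exact mul_le_mul_of_nonneg_left h4 hx0
  have step2 : Real.exp (-(x * (1 - x)⁻¹)) ≤ 1 - x := by
    have h1 : (1 - x)⁻¹ ≤ Real.exp (x * (1 - x)⁻¹) := by
      have h2 := Real.add_one_le_exp (x * (1 - x)⁻¹)
      have hne : (1:ℝ) - x ≠ 0 := by linarith
      have h3 : x * (1 - x)⁻¹ + 1 = (1 - x)⁻¹ := by
        field_simp
        ring
      linarith
    rw [Real.exp_neg]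
    calc (Real.exp (x * (1 - x)⁻¹))⁻¹ ≤ ((1 - x)⁻¹)⁻¹ := by
          refine inv_anti₀ (inv_pos.2 (by linarith)) h1
      _ = 1 - x := inv_inv _
  have step3 : 1 - x ≤ ‖1 - t * t ^ i‖ := by
    have := norm_sub_norm_le (1:ℂ) (t * t ^ i)
    simpa [norm_mul, norm_pow] using this
  exact (step1.trans step2).trans step3

lemma le_norm_P (ht : ‖t‖ < 1) (m : ℕ) :
    Real.exp (-(‖t‖ * (1 - ‖t‖)⁻¹ * (1 - ‖t‖)⁻¹)) ≤ ‖P t m‖ := by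
  have hr0 : (0:ℝ) ≤ ‖t‖ := norm_nonneg t
  calc Real.exp (-(‖t‖ * (1 - ‖t‖)⁻¹ * (1 - ‖t‖)⁻¹))
      ≤ Real.exp (-(∑ i ∈ range m, ‖t‖ * ‖t‖ ^ i * (1 - ‖t‖)⁻¹)) := by
        rw [Real.exp_le_exp, neg_le_neg_iff]
        have : ∑ i ∈ range m, ‖t‖ * ‖t‖ ^ i * (1 - ‖t‖)⁻¹
            = (∑ i ∈ range m, ‖t‖ ^ i) * (‖t‖ * (1 - ‖t‖)⁻¹) := by
          rw [Finset.sum_mul]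
          refine Finset.sum_congr rfl (fun i _ => by ring)
        rw [this]
        calc (∑ i ∈ range m, ‖t‖ ^ i) * (‖t‖ * (1 - ‖t‖)⁻¹)
            ≤ (1 - ‖t‖)⁻¹ * (‖t‖ * (1 - ‖t‖)⁻¹) := by
              refine mul_le_mul_of_nonneg_right (geom_aux ht m)
                (mul_nonneg hr0 (inv_nonneg.2 (by linarith)))
          _ = ‖t‖ * (1 - ‖t‖)⁻¹ * (1 - ‖t‖)⁻¹ := by ring
    _ = ∏ i ∈ range m, Real.exp (-(‖t‖ * ‖t‖ ^ i * (1 - ‖t‖)⁻¹)) := by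
        rw [← Real.exp_sum, ← Finset.sum_neg_distrib]
    _ ≤ ∏ i ∈ range m, ‖1 - t * t ^ i‖ := by
        refine Finset.prod_le_prod (fun i _ => (Real.exp_pos _).le) (fun i _ => factor_lower ht i)
    _ = ‖P t m‖ := (norm_prod _ _).symm

end JTP

namespace JTP

open Filter Topology

lemma tendsto_pp (a t : ℂ) (ht : ‖t‖ < 1) :
    Tendsto (fun N => ∏ k ∈ range N, (1 - a * t ^ k)) atTop
      (𝓝 (∏' k : ℕ, (1 - a * t ^ k))) := by
  by_cases hzero : ∃ k, 1 - a * t ^ k = 0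
  · obtain ⟨k0, hk0⟩ := hzero
    have hp : HasProd (fun k : ℕ => 1 - a * t ^ k) 0 := by
      rw [HasProd]
      refine Tendsto.congr' ?_ tendsto_const_nhds
      filter_upwards [eventually_ge_atTop ({k0} : Finset ℕ)] with s hs
      exact (Finset.prod_eq_zero (hs (Finset.mem_singleton_self k0)) hk0).symm
    rw [hp.tprod_eq]
    refine Tendsto.congr' ?_ tendsto_const_nhds
    filter_upwards [eventually_ge_atTop (k0+1)] with N hN
    exact (Finset.prod_eq_zero (Finset.mem_range.2 (by omega)) hk0).symm
  · push_neg at hzero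
    have hlog : Summable (fun k : ℕ => Complex.log (1 - a * t ^ k)) := by
      have htend : Tendsto (fun k : ℕ => ‖a‖ * ‖t‖ ^ k) atTop (𝓝 0) := by
        have := (tendsto_pow_atTop_nhds_zero_of_lt_one (norm_nonneg t) ht).const_mul ‖a‖
        simpa using this
      refine Summable.of_norm_bounded_eventually (g := fun k => 3/2 * (‖a‖ * ‖t‖ ^ k)) ?_ ?_
      · exact ((summable_geometric_of_lt_one (norm_nonneg t) ht).mul_left ‖a‖).mul_left (3/2)
      · have hev : ∀ᶠ k : ℕ in atTop, ‖a‖ * ‖t‖ ^ k ≤ 1/2 :=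
          htend.eventually_le_const (by norm_num)
        rw [Nat.cofinite_eq_atTop]
        filter_upwards [hev] with k hk
        have h1 : ‖-(a * t ^ k)‖ ≤ 1/2 := by
          rw [norm_neg, norm_mul, norm_pow]; exact hk
        have := Complex.norm_log_one_add_half_le_self h1
        rw [show (1:ℂ) + -(a * t^k) = 1 - a * t^k by ring] at this
        refine this.trans ?_
        rw [norm_neg, norm_mul, norm_pow]
    have hm : Multipliable (fun k : ℕ => 1 - a * t ^ k) := by
      have := Complex.multipliable_of_summable_log hlog
      exact this
    exact hm.hasProd.tendsto_prod_nat

end JTP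

namespace JTP
open Filter Topology
variable {q z : ℂ}

lemma mono_step (hq : q ≠ 0) (hw : z ≠ 0) (n : ℤ) :
    z^(n+1) * q^((n+1)^2) = (z^n * q^(n^2)) * (z * q^(2*n+1)) := by
  rw [zpow_add_one₀ hw, show (n+1)^2 = n^2 + (2*n+1) by ring, zpow_add₀ hq]
  ring

lemma summable_ratio_aux (hq : ‖q‖ < 1) (hq0 : q ≠ 0) (w : ℂ) (hw : w ≠ 0) :
    Summable (fun k : ℕ => ‖w ^ (k:ℤ) * q ^ ((k:ℤ)^2)‖) := by
  refine summable_of_ratio_norm_eventually_le (r := 1/2) (by norm_num) ?_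
  have h2 : ‖q‖^2 < 1 := pow_lt_one₀ (norm_nonneg q) hq two_ne_zero
  have htend : Tendsto (fun k : ℕ => ‖w * q ^ (2*(k:ℤ)+1)‖) atTop (𝓝 0) := by
    have base := (tendsto_pow_atTop_nhds_zero_of_lt_one (by positivity) h2).const_mul (‖w‖ * ‖q‖)
    rw [mul_zero] at base
    refine base.congr (fun k => ?_)
    rw [norm_mul, show (2*(k:ℤ)+1) = ((2*k+1 : ℕ) : ℤ) by push_cast; ring, zpow_natCast,
      norm_pow]
    ring
  filter_upwards [htend.eventually_le_const (show (0:ℝ) < 1/2 by norm_num)] with k hk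
  have hrw : w ^ ((k+1:ℕ):ℤ) * q ^ (((k+1:ℕ):ℤ))^2
      = (w ^ (k:ℤ) * q ^ ((k:ℤ)^2)) * (w * q ^ (2*(k:ℤ)+1)) := by
    rw [show ((k+1:ℕ):ℤ) = (k:ℤ)+1 by push_cast; ring]
    exact mono_step hq0 hw (k:ℤ)
  rw [Real.norm_of_nonneg (norm_nonneg _), Real.norm_of_nonneg (norm_nonneg _), hrw, norm_mul]
  calc ‖w ^ (k:ℤ) * q ^ ((k:ℤ)^2)‖ * ‖w * q ^ (2*(k:ℤ)+1)‖
      ≤ ‖w ^ (k:ℤ) * q ^ ((k:ℤ)^2)‖ * (1/2) := by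
        exact mul_le_mul_of_nonneg_left hk (norm_nonneg _)
    _ = 1/2 * ‖w ^ (k:ℤ) * q ^ ((k:ℤ)^2)‖ := by ring

lemma summable_theta (hq : ‖q‖ < 1) (hq0 : q ≠ 0) (hz : z ≠ 0) :
    Summable (fun n : ℤ => ‖z ^ n * q ^ (n^2)‖) := by
  refine Summable.of_nat_of_neg (summable_ratio_aux hq hq0 z hz) ?_
  refine (summable_ratio_aux hq hq0 z⁻¹ (inv_ne_zero hz)).congr (fun k => ?_)
  congr 1
  rw [inv_zpow, ← zpow_neg, show (-(k:ℤ))^2 = (k:ℤ)^2 by ring]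

end JTP


open Filter Topology Finset

/-- Jacobi triple product identity. -/
theorem jacobi_triple_product (q z : ℂ) (hq : ‖q‖ < 1) (hz : z ≠ 0)
    (hzpow : ∀ n : ℤ, n ≤ 0 → z ≠ q ^ n) :
    qPochInf (q ^ 2) (q ^ 2) * qPochInf (q * z) (q ^ 2) * qPochInf (q / z) (q ^ 2)
      = ∑' n : ℤ, (-1 : ℂ) ^ n * z ^ n * q ^ (n ^ 2) := by
  rcases eq_or_ne q 0 with rfl | hq0
  · -- q = 0 : both sides are 1
    have h2 : ((0:ℂ) ^ 2) = 0 := by norm_num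
    have hL : ∀ a : ℂ, a = 0 → qPochInf a ((0:ℂ)^2) = 1 := by
      intro a ha
      rw [qPochInf, ha]
      simp
    rw [hL _ h2, hL _ (by ring), hL _ (by simp), one_mul, one_mul]
    rw [tsum_eq_single 0 (fun n hn => ?_)]
    · simp
    · rw [zero_zpow _ (pow_ne_zero 2 hn), mul_zero]
  · have hqn : ‖q‖ < 1 := hq
    have ht : ‖(q^2 : ℂ)‖ < 1 := by
      rw [norm_pow]
      exact pow_lt_one₀ (norm_nonneg q) hqn two_ne_zero
    have ht0 : (q^2 : ℂ) ≠ 0 := pow_ne_zero 2 hq0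
    set L : ℝ := Real.exp (-(‖(q^2:ℂ)‖ * (1 - ‖(q^2:ℂ)‖)⁻¹ * (1 - ‖(q^2:ℂ)‖)⁻¹)) with hLdef
    set U : ℝ := Real.exp (‖(q^2:ℂ)‖ * (1 - ‖(q^2:ℂ)‖)⁻¹) with hUdef
    have hL : 0 < L := Real.exp_pos _
    have hU : 0 < U := Real.exp_pos _
    have hPle : ∀ m, ‖JTP.P (q^2) m‖ ≤ U := JTP.norm_P_le ht
    have hPge : ∀ m, L ≤ ‖JTP.P (q^2) m‖ := JTP.le_norm_P ht
    have hPne : ∀ m, JTP.P (q^2) m ≠ 0 := by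
      intro m h
      have := hPge m
      rw [h, norm_zero] at this
      linarith
    set g : ℤ → ℂ := fun n => (-1:ℂ)^n * z^n * q^(n^2) with hgdef
    set f : ℕ → ℤ → ℂ := fun N n => if n ∈ JTP.I N then JTP.P (q^2) N * JTP.F q z N n else 0
      with hfdef
    have hgn : ∀ n : ℤ, ‖g n‖ = ‖z^n * q^(n^2)‖ := by
      intro n
      rw [hgdef]
      simp only [norm_mul, norm_zpow, norm_neg, norm_one, one_zpow, one_mul]
    -- the key expression for B in terms of P
    have hBeq : ∀ (N : ℕ) (n : ℤ), -(N:ℤ) ≤ n → n ≤ N →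
        JTP.B (q^2) (2*N) (n + (N:ℤ))
          = JTP.P (q^2) (2*N) * (JTP.P (q^2) ((n + (N:ℤ)).toNat))⁻¹
              * (JTP.P (q^2) (((N:ℤ) - n).toNat))⁻¹ := by
      intro N n h1 h2
      set k : ℕ := (n + (N:ℤ)).toNat with hkdef
      have hk : ((k:ℕ):ℤ) = n + (N:ℤ) := Int.toNat_of_nonneg (by omega)
      have hk2 : ((N:ℤ) - n).toNat = 2*N - k := by omega
      have hkle : k ≤ 2*N := by omega
      have hBP := JTP.B_mul_P (t := q^2) ht0 (2*N) k (2*N - k) (by omega)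
      rw [← hk, hk2, ← hBP]
      field_simp
      rw [mul_assoc, mul_div_assoc, div_self (mul_ne_zero (hPne k) (hPne (2*N - k))), mul_one]
    -- uniform bound
    have h_bound : ∀ (N : ℕ) (n : ℤ), ‖f N n‖ ≤ (U * (U * (L⁻¹ * L⁻¹))) * ‖z^n * q^(n^2)‖ := by
      intro N n
      rw [hfdef]
      by_cases hmem : n ∈ JTP.I N
      · simp only [hmem, if_true]
        simp only [JTP.I, Finset.mem_Icc] at hmem
        have hB := hBeq N n hmem.1 hmem.2
        have hBnorm : ‖JTP.B (q^2) (2*N) (n + (N:ℤ))‖ ≤ U * (L⁻¹ * L⁻¹) := by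
          rw [hB, norm_mul, norm_mul, norm_inv, norm_inv]
          have i1 : ‖JTP.P (q^2) ((n + (N:ℤ)).toNat)‖⁻¹ ≤ L⁻¹ :=
            inv_anti₀ hL (hPge _)
          have i2 : ‖JTP.P (q^2) (((N:ℤ) - n).toNat)‖⁻¹ ≤ L⁻¹ :=
            inv_anti₀ hL (hPge _)
          calc ‖JTP.P (q^2) (2*N)‖ * ‖JTP.P (q^2) ((n + (N:ℤ)).toNat)‖⁻¹
                * ‖JTP.P (q^2) (((N:ℤ) - n).toNat)‖⁻¹
              ≤ U * L⁻¹ * L⁻¹ := by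
                refine mul_le_mul (mul_le_mul (hPle _) i1 (by positivity) hU.le) i2
                  (by positivity) (by positivity)
            _ = U * (L⁻¹ * L⁻¹) := by ring
        have hFn : ‖JTP.F q z N n‖ ≤ (U * (L⁻¹ * L⁻¹)) * ‖z^n * q^(n^2)‖ := by
          rw [JTP.F, norm_mul]
          have := hgn n
          rw [hgdef] at this
          rw [this]
          exact mul_le_mul_of_nonneg_right hBnorm (norm_nonneg _)
        rw [norm_mul]
        calc ‖JTP.P (q^2) N‖ * ‖JTP.F q z N n‖
            ≤ U * ((U * (L⁻¹ * L⁻¹)) * ‖z^n * q^(n^2)‖) :=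
              mul_le_mul (hPle N) hFn (norm_nonneg _) hU.le
          _ = (U * (U * (L⁻¹ * L⁻¹))) * ‖z^n * q^(n^2)‖ := by ring
      · simp only [hmem, if_false, norm_zero]
        positivity
    -- summability of the bound
    have hboundsum : Summable (fun n : ℤ => (U * (U * (L⁻¹ * L⁻¹))) * ‖z^n * q^(n^2)‖) :=
      (JTP.summable_theta hqn hq0 hz).mul_left _
    -- pointwise convergence
    set Pinf : ℂ := ∏' k : ℕ, (1 - q^2 * (q^2)^k) with hPinfdef
    have hPP : Tendsto (fun N => JTP.P (q^2) N) atTop (𝓝 Pinf) := by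
      have := JTP.tendsto_pp (q^2) (q^2) ht
      exact this
    have hPinfnorm : L ≤ ‖Pinf‖ :=
      ge_of_tendsto hPP.norm (Filter.Eventually.of_forall hPge)
    have hPinf0 : Pinf ≠ 0 := by
      intro h
      rw [h, norm_zero] at hPinfnorm
      linarith
    have h_pt : ∀ n : ℤ, Tendsto (fun N => f N n) atTop (𝓝 (g n)) := by
      intro n
      set d : ℕ → ℂ := fun N => JTP.P (q^2) N * (JTP.P (q^2) (2*N)
        * (JTP.P (q^2) ((n + (N:ℤ)).toNat))⁻¹ * (JTP.P (q^2) (((N:ℤ) - n).toNat))⁻¹ * g n)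
        with hddef
      have m1 : Tendsto (fun N : ℕ => 2*N) atTop atTop :=
        tendsto_atTop_atTop_of_monotone (fun a b h => by omega) (fun b => ⟨b, by omega⟩)
      have m2 : Tendsto (fun N : ℕ => (n + (N:ℤ)).toNat) atTop atTop :=
        tendsto_atTop_atTop_of_monotone (fun a b h => by omega) (fun b => ⟨b + n.natAbs, by omega⟩)
      have m3 : Tendsto (fun N : ℕ => ((N:ℤ) - n).toNat) atTop atTop :=
        tendsto_atTop_atTop_of_monotone (fun a b h => by omega) (fun b => ⟨b + n.natAbs, by omega⟩)
      have hd : Tendsto d atTop (𝓝 (Pinf * (Pinf * Pinf⁻¹ * Pinf⁻¹ * g n))) := by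
        refine hPP.mul ?_
        exact (((hPP.comp m1).mul ((hPP.comp m2).inv₀ hPinf0)).mul
          ((hPP.comp m3).inv₀ hPinf0)).mul tendsto_const_nhds
      have hval : Pinf * (Pinf * Pinf⁻¹ * Pinf⁻¹ * g n) = g n := by
        field_simp
      rw [hval] at hd
      refine hd.congr' ?_
      filter_upwards [eventually_ge_atTop n.natAbs] with N hN
      have hmem : n ∈ JTP.I N := by
        simp only [JTP.I, Finset.mem_Icc]
        omega
      rw [hddef, hfdef]
      simp only [hmem, if_true]
      rw [JTP.F, hBeq N n (by omega) (by omega), hgdef]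
      try ring
    -- identify tsum of f with the partial product expression
    have hTsum : ∀ N : ℕ, ∑' m : ℤ, f N m
        = JTP.P (q^2) N * ∑ n ∈ JTP.I N, JTP.F q z N n := by
      intro N
      rw [tsum_eq_sum (s := JTP.I N) (fun b hb => by rw [hfdef]; simp only [hb, if_false])]
      rw [Finset.mul_sum]
      refine Finset.sum_congr rfl (fun n hn => ?_)
      rw [hfdef]
      simp only [hn, if_true]
    have T1 : Tendsto (fun N => JTP.P (q^2) N * ∑ n ∈ JTP.I N, JTP.F q z N n) atTop
        (𝓝 (∑' n : ℤ, g n)) := by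
      have := tendsto_tsum_of_dominated_convergence hboundsum h_pt
        (Filter.Eventually.of_forall h_bound)
      refine this.congr (fun N => hTsum N)
    have T2 : Tendsto (fun N => JTP.P (q^2) N * ∑ n ∈ JTP.I N, JTP.F q z N n) atTop
        (𝓝 (Pinf * ((∏' k : ℕ, (1 - q*z * (q^2)^k)) * (∏' k : ℕ, (1 - q*z⁻¹ * (q^2)^k))))) := by
      have h1 := (JTP.tendsto_pp (q*z) (q^2) ht).mul (JTP.tendsto_pp (q*z⁻¹) (q^2) ht)
      refine (hPP.mul h1).congr (fun N => ?_)
      rw [← JTP.finite_id hq0 hz N, ← Finset.prod_mul_distrib]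
    have hfinal := tendsto_nhds_unique T2 T1
    rw [qPochInf, qPochInf, qPochInf, div_eq_mul_inv, mul_assoc]
    exact hfinal
end

section
/- Define Y_j(q) = ∑_{n ≡ j mod 3} (-1)^n q^{n^2+n} / (1 + q^{2n+1}) for j = 0, 1, 2, the sum over all integers n congruent to j modulo 3. Then Y₀(q) - Y₂(q) = (q^6;q^6)_∞. -/
open Complex

/-- `Y_j(q) = ∑_{n ≡ j (mod 3)} (-1)ⁿ q^{n²+n}/(1+q^{2n+1})`. -/
noncomputable def Ysum (q : ℂ) (j : ℤ) : ℂ :=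
  ∑' n : {m : ℤ // m % 3 = j},
    (-1 : ℂ) ^ (n : ℤ) * q ^ ((n : ℤ) ^ 2 + (n : ℤ)) / (1 + q ^ (2 * (n : ℤ) + 1))

namespace Y0subY2Aux
open Finset Filter Topology

noncomputable section

namespace Penta
variable (Q : ℂ)

def P (k n : ℕ) : ℂ := ∏ i ∈ range n, (1 - Q ^ (k + i))

def pterm (k n : ℕ) : ℂ := Q ^ (k * n) * P Q k n

def U (k : ℕ) : ℂ := ∑' n, pterm Q k n

def vt (k m : ℕ) : ℂ := Q ^ ((k+1) * m) * P Q k m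

def pentE : ℕ → ℕ
  | 0 => 0
  | (k+1) => pentE k + 3*k + 1

def T (N : ℕ) : ℂ :=
  1 + ∑ k ∈ range N, (-1:ℂ)^(k+1) * (Q^(pentE (k+1)) + Q^(pentE (k+1) + (k+1)))

def hp (k : ℕ) : ℂ := (-1:ℂ)^k * Q^(pentE k + k)

def hm (k : ℕ) : ℂ := (-1:ℂ)^(k+1) * Q^(pentE (k+1))

variable {Q}

lemma P_bound (hQ : ‖Q‖ < 1) (k n : ℕ) : ‖P Q k n‖ ≤ Real.exp (1 - ‖Q‖)⁻¹ := by
  have h0 : (0:ℝ) ≤ ‖Q‖ := norm_nonneg _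
  calc ‖P Q k n‖ = ∏ i ∈ range n, ‖1 - Q ^ (k + i)‖ := norm_prod _ _
    _ ≤ ∏ i ∈ range n, Real.exp (‖Q‖ ^ i) := by
        apply Finset.prod_le_prod (fun i _ => norm_nonneg _)
        intro i _
        calc ‖1 - Q ^ (k + i)‖ ≤ ‖(1:ℂ)‖ + ‖Q ^ (k + i)‖ := norm_sub_le _ _
          _ = 1 + ‖Q‖ ^ (k + i) := by rw [norm_one, norm_pow]
          _ ≤ 1 + ‖Q‖ ^ i := by
              have := pow_le_pow_of_le_one h0 hQ.le (Nat.le_add_left i k)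
              linarith
          _ ≤ Real.exp (‖Q‖ ^ i) := by
              have := Real.add_one_le_exp (‖Q‖ ^ i); linarith
    _ = Real.exp (∑ i ∈ range n, ‖Q‖ ^ i) := by rw [← Real.exp_sum]
    _ ≤ Real.exp (1 - ‖Q‖)⁻¹ := by
        apply Real.exp_le_exp.2
        calc ∑ i ∈ range n, ‖Q‖ ^ i ≤ ∑' i : ℕ, ‖Q‖ ^ i :=
              Summable.sum_le_tsum _ (fun i _ => pow_nonneg h0 i) (summable_geometric_of_lt_one h0 hQ)
          _ = (1 - ‖Q‖)⁻¹ := tsum_geometric_of_lt_one h0 hQ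

lemma pterm_bound (hQ : ‖Q‖ < 1) (k n : ℕ) (hk : 1 ≤ k) :
    ‖pterm Q k n‖ ≤ Real.exp (1 - ‖Q‖)⁻¹ * ‖Q‖ ^ n := by
  have h0 : (0:ℝ) ≤ ‖Q‖ := norm_nonneg _
  rw [pterm, norm_mul, norm_pow, mul_comm]
  have h1 : ‖Q‖ ^ (k * n) ≤ ‖Q‖ ^ n :=
    pow_le_pow_of_le_one h0 hQ.le (Nat.le_mul_of_pos_left n hk)
  have h2 := P_bound hQ k n
  have h3 : (0:ℝ) < Real.exp (1 - ‖Q‖)⁻¹ := Real.exp_pos _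
  exact mul_le_mul h2 h1 (pow_nonneg h0 _) h3.le

lemma summable_pterm (hQ : ‖Q‖ < 1) {k : ℕ} (hk : 1 ≤ k) : Summable (pterm Q k) := by
  apply Summable.of_norm_bounded (((summable_geometric_of_lt_one (norm_nonneg Q) hQ)).mul_left
    (Real.exp (1 - ‖Q‖)⁻¹)) (pterm_bound hQ k · hk)

lemma U_bound (hQ : ‖Q‖ < 1) {k : ℕ} (hk : 1 ≤ k) :
    ‖U Q k‖ ≤ Real.exp (1 - ‖Q‖)⁻¹ * (1 - ‖Q‖)⁻¹ := by
  have h0 : (0:ℝ) ≤ ‖Q‖ := norm_nonneg _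
  have hs : Summable (fun n : ℕ => Real.exp (1 - ‖Q‖)⁻¹ * ‖Q‖ ^ n) :=
    (summable_geometric_of_lt_one h0 hQ).mul_left _
  have hs2 : Summable fun n => ‖pterm Q k n‖ :=
    (summable_pterm hQ hk).norm
  calc ‖U Q k‖ ≤ ∑' n : ℕ, ‖pterm Q k n‖ := norm_tsum_le_tsum_norm hs2
    _ ≤ ∑' n : ℕ, (Real.exp (1 - ‖Q‖)⁻¹ * ‖Q‖ ^ n) :=
        Summable.tsum_le_tsum (pterm_bound hQ k · hk) hs2 hs
    _ = Real.exp (1 - ‖Q‖)⁻¹ * (1 - ‖Q‖)⁻¹ := by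
        rw [tsum_mul_left, tsum_geometric_of_lt_one h0 hQ]

lemma summable_vt (hQ : ‖Q‖ < 1) (k : ℕ) : Summable (vt Q k) := by
  have h0 : (0:ℝ) ≤ ‖Q‖ := norm_nonneg _
  apply Summable.of_norm_bounded
    ((summable_geometric_of_lt_one h0 hQ).mul_left (Real.exp (1 - ‖Q‖)⁻¹))
  intro m
  rw [vt, norm_mul, norm_pow, mul_comm]
  exact mul_le_mul (P_bound hQ k m)
    (pow_le_pow_of_le_one h0 hQ.le (Nat.le_mul_of_pos_left m (Nat.succ_pos k)))
    (pow_nonneg h0 _) (Real.exp_pos _).le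

lemma Qpow_ne_one (hQ : ‖Q‖ < 1) {k : ℕ} (hk : 1 ≤ k) : (1:ℂ) - Q ^ k ≠ 0 := by
  rw [sub_ne_zero]
  intro h
  have : ‖Q ^ k‖ < 1 := by
    rw [norm_pow]
    calc ‖Q‖ ^ k ≤ ‖Q‖ ^ 1 := pow_le_pow_of_le_one (norm_nonneg _) hQ.le hk
      _ < 1 := by simpa using hQ
  rw [← h] at this
  simp at this

lemma U_rec (hQ : ‖Q‖ < 1) {k : ℕ} (hk : 1 ≤ k) :
    U Q k = 1 + Q ^ k - Q ^ (3*k+1) * U Q (k+1) := by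
  have hpt := summable_pterm hQ hk
  have hvt := summable_vt hQ k
  have hpt' := summable_pterm hQ (Nat.le_add_right 1 k |>.trans (by omega) : 1 ≤ k+1)
  -- Step A
  have htail : (∑' m, pterm Q k (m+1)) = Q ^ k * U Q k - Q ^ (2*k) * ∑' m, vt Q k m := by
    have heq : ∀ m : ℕ, pterm Q k (m+1) = Q ^ k * pterm Q k m - Q ^ (2*k) * vt Q k m := by
      intro m
      rw [pterm, pterm, vt, P, P, Finset.prod_range_succ]
      ring
    calc (∑' m, pterm Q k (m+1)) = ∑' m, (Q ^ k * pterm Q k m - Q ^ (2*k) * vt Q k m) :=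
          tsum_congr heq
      _ = Q ^ k * U Q k - Q ^ (2*k) * ∑' m, vt Q k m := by
          rw [Summable.tsum_sub (hpt.mul_left _) (hvt.mul_left _), tsum_mul_left, tsum_mul_left, U]
  have hA : U Q k = 1 + (Q ^ k * U Q k - Q ^ (2*k) * ∑' m, vt Q k m) := by
    conv_lhs => rw [show U Q k = pterm Q k 0 + ∑' m, pterm Q k (m+1) from Summable.tsum_eq_zero_add hpt]
    rw [htail]
    congr 1
    simp [pterm, P]
  -- Step B
  have hB : (∑' m, vt Q k m) = 1 + ((1 - Q ^ k) * Q ^ (k+1)) * U Q (k+1) := by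
    have heq : ∀ m : ℕ, vt Q k (m+1) = ((1 - Q ^ k) * Q ^ (k+1)) * pterm Q (k+1) m := by
      intro m
      rw [vt, pterm, P, P, Finset.prod_range_succ']
      rw [show ∏ i ∈ range m, (1 - Q ^ (k + (i+1))) = ∏ i ∈ range m, (1 - Q ^ ((k+1) + i)) from
        Finset.prod_congr rfl fun i _ => by rw [show k + (i+1) = k+1+i by omega]]
      ring
    rw [Summable.tsum_eq_zero_add hvt]
    congr 1
    · simp [vt, P]
    calc (∑' m, vt Q k (m+1)) = ∑' m, ((1 - Q ^ k) * Q ^ (k+1)) * pterm Q (k+1) m :=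
          tsum_congr heq
      _ = ((1 - Q ^ k) * Q ^ (k+1)) * U Q (k+1) := by rw [tsum_mul_left, U]
  rw [hB] at hA
  apply mul_left_cancel₀ (Qpow_ne_one hQ hk)
  linear_combination hA

lemma pentE_ge (k : ℕ) : k ≤ pentE k := by
  induction k with
  | zero => simp [pentE]
  | succ k ih => rw [pentE]; omega

lemma prod_eq (N : ℕ) :
    ∏ j ∈ range N, (1 - Q * Q^j) = 1 - ∑ n ∈ range N, Q * pterm Q 1 n := by
  induction N with
  | zero => simp
  | succ N ih =>
    have hP : P Q 1 N = ∏ j ∈ range N, (1 - Q * Q ^ j) :=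
      Finset.prod_congr rfl fun i _ => by rw [pow_add, pow_one]
    rw [prod_range_succ, sum_range_succ, pterm, hP, ih]
    ring

lemma one_sub_ne (hQ : ‖Q‖ < 1) (j : ℕ) : 1 - Q * Q ^ j ≠ 0 := by
  intro h
  have h2 : Q * Q ^ j = 1 := by linear_combination -h
  have : ‖Q * Q ^ j‖ < 1 := by
    rw [norm_mul, norm_pow]
    calc ‖Q‖ * ‖Q‖ ^ j ≤ ‖Q‖ * 1 := by
          apply mul_le_mul_of_nonneg_left (pow_le_one₀ (norm_nonneg _) hQ.le) (norm_nonneg _)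
      _ < 1 := by simpa using hQ
  rw [h2] at this
  simp at this

lemma mult (hQ : ‖Q‖ < 1) : Multipliable (fun j : ℕ => 1 - Q * Q ^ j) := by
  have h0 : (0:ℝ) ≤ ‖Q‖ := norm_nonneg _
  apply Complex.multipliable_of_summable_log
  apply Summable.of_norm_bounded_eventually_nat (g := fun n => 3/2 * (‖Q‖ * ‖Q‖ ^ n))
    (((summable_geometric_of_lt_one h0 hQ).mul_left _).mul_left _)
  have hev : ∀ᶠ n : ℕ in atTop, ‖Q‖ ^ n ≤ 1/2 :=
    (tendsto_pow_atTop_nhds_zero_of_lt_one h0 hQ).eventually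
      (eventually_le_nhds (by norm_num))
  filter_upwards [hev] with n hn
  have hz : ‖-(Q * Q ^ n)‖ ≤ 1/2 := by
    rw [norm_neg, norm_mul, norm_pow]
    calc ‖Q‖ * ‖Q‖ ^ n ≤ 1 * (1/2) := by
          apply mul_le_mul hQ.le hn (pow_nonneg h0 _) zero_le_one
      _ = 1/2 := by norm_num
  have := Complex.norm_log_one_add_half_le_self hz
  rw [show (1 : ℂ) + -(Q * Q ^ n) = 1 - Q * Q ^ n by ring] at this
  calc ‖Complex.log (1 - Q * Q ^ n)‖ ≤ 3/2 * ‖-(Q * Q ^ n)‖ := this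
    _ = 3/2 * (‖Q‖ * ‖Q‖ ^ n) := by rw [norm_neg, norm_mul, norm_pow]

lemma tprod_eq_base (hQ : ‖Q‖ < 1) : (∏' j : ℕ, (1 - Q * Q ^ j)) = 1 - Q * U Q 1 := by
  have h1 : Tendsto (fun N => ∏ j ∈ range N, (1 - Q * Q ^ j)) atTop
      (𝓝 (∏' j : ℕ, (1 - Q * Q ^ j))) := (mult hQ).hasProd.tendsto_prod_nat
  have hs : HasSum (fun n => Q * pterm Q 1 n) (Q * U Q 1) :=
    (summable_pterm hQ le_rfl).hasSum.mul_left Q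
  have h2 : Tendsto (fun N => 1 - ∑ n ∈ range N, Q * pterm Q 1 n) atTop
      (𝓝 (1 - Q * U Q 1)) := tendsto_const_nhds.sub hs.tendsto_sum_nat
  refine tendsto_nhds_unique h1 ?_
  have := funext (fun N => prod_eq (Q := Q) N)
  rw [this]
  exact h2

lemma claim (hQ : ‖Q‖ < 1) (N : ℕ) :
    1 - Q * U Q 1 = T Q N + (-1:ℂ)^(N+1) * Q^(pentE (N+1)) * U Q (N+1) := by
  induction N with
  | zero =>
    have : pentE 1 = 1 := rfl
    rw [this, T]
    simp
    ring
  | succ N ih =>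
    rw [ih, U_rec hQ (show 1 ≤ N+1 by omega)]
    rw [show pentE (N+1+1) = pentE (N+1) + (3*(N+1)+1) from by rw [pentE]; ring]
    rw [T, T, sum_range_succ]
    ring

lemma rem_tendsto (hQ : ‖Q‖ < 1) :
    Tendsto (fun N => (-1:ℂ)^(N+1) * Q^(pentE (N+1)) * U Q (N+1)) atTop (𝓝 0) := by
  have h0 : (0:ℝ) ≤ ‖Q‖ := norm_nonneg _
  refine squeeze_zero_norm (a := fun N => Real.exp (1 - ‖Q‖)⁻¹ * (1 - ‖Q‖)⁻¹ * ‖Q‖ ^ (N+1))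
    (fun N => ?_) ?_
  · 
    rw [norm_mul, norm_mul, norm_pow, norm_neg, norm_one, one_pow, one_mul, norm_pow]
    rw [mul_comm]
    apply mul_le_mul (U_bound hQ (by omega))
      (pow_le_pow_of_le_one h0 hQ.le (by have := pentE_ge (N+1); omega))
      (pow_nonneg h0 _) (mul_nonneg (Real.exp_pos _).le (inv_nonneg.2 (by linarith)))
  · have : Tendsto (fun N : ℕ => ‖Q‖ ^ (N+1)) atTop (𝓝 0) :=
      (tendsto_pow_atTop_nhds_zero_of_lt_one h0 hQ).comp (tendsto_add_atTop_nat 1)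
    simpa using this.const_mul (Real.exp (1 - ‖Q‖)⁻¹ * (1 - ‖Q‖)⁻¹)

lemma summable_hp (hQ : ‖Q‖ < 1) : Summable (hp Q) := by
  have h0 : (0:ℝ) ≤ ‖Q‖ := norm_nonneg _
  apply Summable.of_norm_bounded (summable_geometric_of_lt_one h0 hQ)
  intro k
  rw [hp, norm_mul, norm_pow, norm_pow, norm_neg, norm_one, one_pow, one_mul]
  exact pow_le_pow_of_le_one h0 hQ.le (by have := pentE_ge k; omega)

lemma summable_hm (hQ : ‖Q‖ < 1) : Summable (hm Q) := by
  have h0 : (0:ℝ) ≤ ‖Q‖ := norm_nonneg _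
  apply Summable.of_norm_bounded (summable_geometric_of_lt_one h0 hQ)
  intro k
  rw [hm, norm_mul, norm_pow, norm_pow, norm_neg, norm_one, one_pow, one_mul]
  exact pow_le_pow_of_le_one h0 hQ.le (by have := pentE_ge (k+1); omega)

theorem penta (hQ : ‖Q‖ < 1) :
    (∏' j : ℕ, (1 - Q * Q ^ j)) = (∑' k : ℕ, hp Q k) + ∑' k : ℕ, hm Q k := by
  rw [tprod_eq_base hQ]
  have hT : ∀ N, T Q N = hp Q 0 + ∑ k ∈ range N, (hp Q (k+1) + hm Q k) := by
    intro N
    rw [T, hp]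
    have : pentE 0 = 0 := rfl
    rw [this]
    norm_num
    apply sum_congr rfl
    intro k _
    rw [hp, hm]
    ring
  have hshift : Summable (fun k => hp Q (k+1)) := by
    have := (summable_nat_add_iff 1).2 (summable_hp hQ)
    simpa using this
  have h1 : HasSum (fun k => hp Q (k+1) + hm Q k)
      ((∑' k : ℕ, hp Q (k+1)) + ∑' k : ℕ, hm Q k) :=
    hshift.hasSum.add (summable_hm hQ).hasSum
  have h2 : Tendsto (T Q) atTop
      (𝓝 (hp Q 0 + ((∑' k : ℕ, hp Q (k+1)) + ∑' k : ℕ, hm Q k))) := by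
    rw [funext hT]
    exact tendsto_const_nhds.add h1.tendsto_sum_nat
  have h3 : Tendsto (T Q) atTop (𝓝 (1 - Q * U Q 1)) := by
    have h4 : T Q = fun N => (1 - Q * U Q 1) - (-1:ℂ)^(N+1) * Q^(pentE (N+1)) * U Q (N+1) := by
      funext N
      rw [claim hQ N]; ring
    rw [h4]
    simpa using tendsto_const_nhds.sub (rem_tendsto hQ)
  rw [tendsto_nhds_unique h3 h2, Summable.tsum_eq_zero_add (summable_hp hQ)]
  ring

lemma pentE_sq : ∀ k : ℕ, 2 * pentE k + k = 3 * k ^ 2 := by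
  intro k
  induction k with
  | zero => simp [pentE]
  | succ k ih =>
    rw [pentE]
    have h : 3 * (k+1) ^ 2 = 3 * k ^ 2 + 6 * k + 3 := by ring
    omega

lemma pentE_six (n : ℕ) : 6 * (pentE n + n) = 9 * n ^ 2 + 3 * n := by
  calc 6 * (pentE n + n) = 3 * (2 * pentE n + n) + 3 * n := by ring
    _ = 3 * (3 * n ^ 2) + 3 * n := by rw [pentE_sq n]
    _ = 9 * n ^ 2 + 3 * n := by ring

end Penta

namespace StepA
variable (q : ℂ)

def g (n : ℤ) : ℂ := (-1 : ℂ) ^ n * q ^ (n ^ 2 + n) / (1 + q ^ (2 * n + 1))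

def hz (m : ℤ) : ℂ := (-1 : ℂ) ^ m * q ^ (9 * m ^ 2 + 3 * m)

def e0 : ℤ ≃ {m : ℤ // m % 3 = 0} where
  toFun m := ⟨3 * m, by omega⟩
  invFun x := x.1 / 3
  left_inv m := by show 3 * m / 3 = m; omega
  right_inv x := by
    apply Subtype.ext
    show 3 * (x.1 / 3) = x.1
    have := x.2
    omega

def e2 : ℤ ≃ {m : ℤ // m % 3 = 2} where
  toFun m := ⟨-3 * m - 1, by omega⟩
  invFun x := (-x.1 - 1) / 3
  left_inv m := by show (-(-3 * m - 1) - 1) / 3 = m; omega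
  right_inv x := by
    apply Subtype.ext
    show -3 * ((-x.1 - 1) / 3) - 1 = x.1
    have := x.2
    omega

variable {q}

lemma neg_one_zpow_inv (z : ℤ) : ((-1 : ℂ) ^ z)⁻¹ = (-1 : ℂ) ^ z := by
  refine inv_eq_of_mul_eq_one_right ?_
  rw [← zpow_add₀ (by norm_num : (-1:ℂ) ≠ 0), show z + z = 2 * z by ring, zpow_mul]
  norm_num

lemma denom_lb (hq : ‖q‖ < 1) (hq0 : q ≠ 0) {j : ℤ} (hj : j ≠ 0) :
    min (1 - ‖q‖) ((1 - ‖q‖) / ‖q‖) ≤ ‖1 + q ^ j‖ := by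
  have hr0 : (0:ℝ) < ‖q‖ := norm_pos_iff.2 hq0
  rcases lt_or_gt_of_ne hj with hneg | hpos
  · -- j ≤ -1 : ‖q^j‖ ≥ 1/‖q‖
    have h1 : ‖q‖ ^ (-1 : ℤ) ≤ ‖q‖ ^ j :=
      zpow_le_zpow_right_of_le_one₀ hr0 hq.le (by omega)
    have h2 : ‖q ^ j‖ ≤ ‖1 + q ^ j‖ + 1 := by
      calc ‖q ^ j‖ = ‖(1 + q ^ j) - 1‖ := by ring_nf
        _ ≤ ‖1 + q ^ j‖ + ‖(1:ℂ)‖ := norm_sub_le _ _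
        _ = ‖1 + q ^ j‖ + 1 := by rw [norm_one]
    have h3 : ‖q‖ ^ (-1 : ℤ) = (‖q‖)⁻¹ := zpow_neg_one _
    have h4 : ‖q ^ j‖ = ‖q‖ ^ j := norm_zpow _ _
    have h5 : (1 - ‖q‖) / ‖q‖ = (‖q‖)⁻¹ - 1 := by rw [sub_div, div_self hr0.ne', one_div]
    calc min (1 - ‖q‖) ((1 - ‖q‖) / ‖q‖) ≤ (1 - ‖q‖) / ‖q‖ := min_le_right _ _
      _ ≤ ‖1 + q ^ j‖ := by rw [h5]; rw [h3] at h1; rw [h4] at h2; linarith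
  · have h1 : ‖q‖ ^ j ≤ ‖q‖ ^ (1 : ℤ) :=
      zpow_le_zpow_right_of_le_one₀ hr0 hq.le (by omega)
    have h2 : (1:ℝ) ≤ ‖1 + q ^ j‖ + ‖q ^ j‖ := by
      calc (1:ℝ) = ‖(1 + q ^ j) - q ^ j‖ := by ring_nf; rw [norm_one]
        _ ≤ ‖1 + q ^ j‖ + ‖q ^ j‖ := norm_sub_le _ _
    have h4 : ‖q ^ j‖ = ‖q‖ ^ j := norm_zpow _ _
    calc min (1 - ‖q‖) ((1 - ‖q‖) / ‖q‖) ≤ 1 - ‖q‖ := min_le_left _ _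
      _ ≤ ‖1 + q ^ j‖ := by rw [h4] at h2; simp only [zpow_one] at h1; linarith

lemma exp_ge (m : ℤ) : (m.natAbs : ℤ) ≤ 9 * m ^ 2 + 3 * m := by
  have h1 : (m.natAbs : ℤ) * (m.natAbs : ℤ) = m * m := Int.natAbs_mul_self' m
  have h2 : m ≤ (m.natAbs : ℤ) := Int.le_natAbs
  have h3 : -m ≤ (m.natAbs : ℤ) := by rw [← Int.natAbs_neg]; exact Int.le_natAbs
  nlinarith [sq_nonneg ((m.natAbs : ℤ) - 1), sq_nonneg m]

lemma summable_rpow (hq : ‖q‖ < 1) (hq0 : q ≠ 0) :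
    Summable (fun m : ℤ => ‖q‖ ^ (9 * m ^ 2 + 3 * m : ℤ)) := by
  have hr0 : (0:ℝ) < ‖q‖ := norm_pos_iff.2 hq0
  have hbase : Summable (fun m : ℤ => ‖q‖ ^ (m.natAbs)) := by
    apply Summable.of_nat_of_neg_add_one
    · simpa using summable_geometric_of_lt_one hr0.le hq
    · apply Summable.congr ((summable_geometric_of_lt_one hr0.le hq).mul_left ‖q‖)
      intro n
      rw [show (-((n:ℤ)+1)).natAbs = n+1 by omega, pow_succ]
      ring
  apply Summable.of_nonneg_of_le (fun m => zpow_nonneg hr0.le _) (fun m => ?_) hbase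
  calc ‖q‖ ^ (9 * m ^ 2 + 3 * m : ℤ) ≤ ‖q‖ ^ ((m.natAbs : ℤ)) :=
        zpow_le_zpow_right_of_le_one₀ hr0 hq.le (exp_ge m)
    _ = ‖q‖ ^ (m.natAbs) := zpow_natCast _ _

lemma hD2_of {m : ℤ} (hw : q ^ (6*m+1) ≠ 0) (hD : 1 + q ^ (6*m+1) ≠ 0) :
    1 + (q ^ (6*m+1))⁻¹ ≠ 0 := by
  intro h
  apply hD
  have h2 := congrArg (· * q ^ (6*m+1)) h
  simp only [add_mul, one_mul, inv_mul_cancel₀ hw, zero_mul] at h2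
  linear_combination h2

lemma key (hq0 : q ≠ 0) (m : ℤ) (hD : 1 + q ^ (6*m+1) ≠ 0) :
    g q (3*m) - g q (-3*m-1) = hz q m := by
  have hw : q ^ (6*m+1) ≠ 0 := zpow_ne_zero _ hq0
  have hD2 := hD2_of hw hD
  have e1 : ((3*m)^2 + 3*m : ℤ) = 9*m^2+3*m := by ring
  have e2 : ((2:ℤ)*(3*m)+1 : ℤ) = 6*m+1 := by ring
  have e3 : ((-3*m-1)^2 + (-3*m-1) : ℤ) = 9*m^2+3*m := by ring
  have e4 : ((2:ℤ)*(-3*m-1)+1 : ℤ) = -(6*m+1) := by ring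
  have s1 : (-1:ℂ)^(3*m) = (-1:ℂ)^m := by
    rw [zpow_mul]
    norm_num
  have s2 : (-1:ℂ)^(-3*m-1 : ℤ) = -(-1:ℂ)^m := by
    rw [show (-3*m-1 : ℤ) = -(3*m+1) by ring, zpow_neg, neg_one_zpow_inv,
      zpow_add₀ (by norm_num : (-1:ℂ) ≠ 0), s1, zpow_one]
    ring
  rw [g, g, hz, e1, e2, e3, e4, s1, s2, zpow_neg]
  set w := q ^ (6*m+1) with hwdef
  set A := q ^ (9*m^2+3*m : ℤ) with hAdef
  set s := (-1:ℂ)^m with hsdef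
  have h1 : 1 + w⁻¹ = (1+w) * w⁻¹ := by rw [add_mul, one_mul, mul_inv_cancel₀ hw]; ring
  rw [h1, div_eq_mul_inv, div_eq_mul_inv, mul_inv, inv_inv]
  have h2 : (1+w) * (1+w)⁻¹ = 1 := mul_inv_cancel₀ hD
  linear_combination (s * A) * h2

lemma summable_S1 (hq : ‖q‖ < 1) (hq0 : q ≠ 0) : Summable (fun m : ℤ => g q (3*m)) := by
  have hr0 : (0:ℝ) < ‖q‖ := norm_pos_iff.2 hq0
  have hc : (0:ℝ) < min (1 - ‖q‖) ((1 - ‖q‖) / ‖q‖) :=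
    lt_min (by linarith) (div_pos (by linarith) hr0)
  apply Summable.of_norm_bounded
    ((summable_rpow hq hq0).mul_left (min (1 - ‖q‖) ((1 - ‖q‖) / ‖q‖))⁻¹)
  intro m
  rw [g, norm_div, norm_mul, norm_zpow, norm_zpow, norm_neg, norm_one, one_zpow, one_mul,
    show ((3*m)^2 + 3*m : ℤ) = 9*m^2+3*m by ring]
  calc ‖q‖ ^ (9*m^2+3*m : ℤ) / ‖1 + q ^ (2*(3*m)+1)‖
      ≤ ‖q‖ ^ (9*m^2+3*m : ℤ) / min (1 - ‖q‖) ((1 - ‖q‖) / ‖q‖) := by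
        apply div_le_div_of_nonneg_left (zpow_pos hr0 _).le hc
        exact denom_lb hq hq0 (by omega)
    _ = (min (1 - ‖q‖) ((1 - ‖q‖) / ‖q‖))⁻¹ * ‖q‖ ^ (9*m^2+3*m : ℤ) := div_eq_inv_mul _ _

lemma summable_S2 (hq : ‖q‖ < 1) (hq0 : q ≠ 0) : Summable (fun m : ℤ => g q (-3*m-1)) := by
  have hr0 : (0:ℝ) < ‖q‖ := norm_pos_iff.2 hq0
  have hc : (0:ℝ) < min (1 - ‖q‖) ((1 - ‖q‖) / ‖q‖) :=
    lt_min (by linarith) (div_pos (by linarith) hr0)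
  apply Summable.of_norm_bounded
    ((summable_rpow hq hq0).mul_left (min (1 - ‖q‖) ((1 - ‖q‖) / ‖q‖))⁻¹)
  intro m
  rw [g, norm_div, norm_mul, norm_zpow, norm_zpow, norm_neg, norm_one, one_zpow, one_mul,
    show ((-3*m-1)^2 + (-3*m-1) : ℤ) = 9*m^2+3*m by ring]
  calc ‖q‖ ^ (9*m^2+3*m : ℤ) / ‖1 + q ^ (2*(-3*m-1)+1)‖
      ≤ ‖q‖ ^ (9*m^2+3*m : ℤ) / min (1 - ‖q‖) ((1 - ‖q‖) / ‖q‖) := by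
        apply div_le_div_of_nonneg_left (zpow_pos hr0 _).le hc
        exact denom_lb hq hq0 (by omega)
    _ = (min (1 - ‖q‖) ((1 - ‖q‖) / ‖q‖))⁻¹ * ‖q‖ ^ (9*m^2+3*m : ℤ) := div_eq_inv_mul _ _

lemma summable_hz (hq : ‖q‖ < 1) (hq0 : q ≠ 0) : Summable (hz q) := by
  apply Summable.of_norm_bounded (summable_rpow hq hq0)
  intro m
  rw [hz, norm_mul, norm_zpow, norm_zpow, norm_neg, norm_one, one_zpow, one_mul]

end StepA
end
end Y0subY2Aux

open Y0subY2Aux Y0subY2Aux.Penta Y0subY2Aux.StepA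

theorem Y0_sub_Y2 (q : ℂ) (hq0 : 0 < ‖q‖) (hq : ‖q‖ < 1)
    (hpole : ∀ n : ℤ, q ^ (2 * n + 1) ≠ -1) :
    Ysum q 0 - Ysum q 2 = qPochInf (q ^ 6) (q ^ 6) := by
  have hq' : ‖q‖ < 1 := by exact hq
  have hq0' : q ≠ 0 := by
    intro h; rw [h] at hq0; simp at hq0
  set Q := q ^ 6 with hQdef
  have hQ : ‖Q‖ < 1 := by
    rw [hQdef, norm_pow]
    exact pow_lt_one₀ (norm_nonneg _) hq' (by norm_num)
  have hY0 : Ysum q 0 = ∑' m : ℤ, g q (3 * m) := by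
    calc Ysum q 0 = ∑' n : {m : ℤ // m % 3 = 0}, g q n.1 := rfl
      _ = ∑' m : ℤ, g q ((e0 m) : ℤ) := (Equiv.tsum_eq e0 _).symm
      _ = ∑' m : ℤ, g q (3 * m) := tsum_congr fun m => rfl
  have hY2 : Ysum q 2 = ∑' m : ℤ, g q (-3 * m - 1) := by
    calc Ysum q 2 = ∑' n : {m : ℤ // m % 3 = 2}, g q n.1 := rfl
      _ = ∑' m : ℤ, g q ((e2 m) : ℤ) := (Equiv.tsum_eq e2 _).symm
      _ = ∑' m : ℤ, g q (-3 * m - 1) := tsum_congr fun m => rfl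
  have hDm : ∀ m : ℤ, 1 + q ^ (6 * m + 1) ≠ 0 := by
    intro m h
    apply hpole (3 * m)
    rw [show (2 * (3 * m) + 1 : ℤ) = 6 * m + 1 by ring]
    linear_combination h
  have hstep : Ysum q 0 - Ysum q 2 = ∑' m : ℤ, hz q m := by
    rw [hY0, hY2, ← Summable.tsum_sub (summable_S1 hq' hq0') (summable_S2 hq' hq0')]
    exact tsum_congr fun m => key hq0' m (hDm m)
  have hznat : ∀ n : ℕ, hz q (n : ℤ) = hp Q n := by
    intro n
    have hcast : (9 * (n : ℤ) ^ 2 + 3 * (n : ℤ)) = ((9 * n ^ 2 + 3 * n : ℕ) : ℤ) := by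
      push_cast; ring
    rw [hz, hcast, zpow_natCast, zpow_natCast, hp, ← pow_mul,
      show 6 * (pentE n + n) = 9 * n ^ 2 + 3 * n from pentE_six n]
  have hzneg : ∀ n : ℕ, hz q (-((n : ℤ) + 1)) = hm Q n := by
    intro n
    have hcast : (9 * (-((n : ℤ) + 1)) ^ 2 + 3 * (-((n : ℤ) + 1)))
        = ((6 * pentE (n + 1) : ℕ) : ℤ) := by
      have h := pentE_sq (n + 1)
      zify at h
      push_cast
      linear_combination (-3 : ℤ) * h
    have hs : (-1 : ℂ) ^ (-((n : ℤ) + 1)) = (-1 : ℂ) ^ (n + 1 : ℕ) := by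
      rw [zpow_neg, neg_one_zpow_inv, show ((n : ℤ) + 1) = ((n + 1 : ℕ) : ℤ) by push_cast; ring,
        zpow_natCast]
    rw [hz, hcast, zpow_natCast, hs, hm, ← pow_mul]
  have Sn : Summable (fun n : ℕ => hz q (n : ℤ)) :=
    (summable_hp hQ).congr fun n => (hznat n).symm
  have Sm : Summable (fun n : ℕ => hz q (-((n : ℤ) + 1))) :=
    (summable_hm hQ).congr fun n => (hzneg n).symm
  rw [hstep, tsum_of_nat_of_neg_add_one Sn Sm, tsum_congr hznat, tsum_congr hzneg]
  exact (penta hQ).symm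
end
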